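/- Let M ≥ 1 be an integer, P > 0, f > 0, α > 0, R real, and let n ≥ 3 be a natural number. Then ∑_{β=2}^{n−1} (R − D(β)) ≥ (n − 2)·(R − Δ̃) − ((M−1)/(M f))·log(n − 1), where D(β) := log((1 + (P/M)·(M−1)/(1 + β f P) + α f P)/(1 + α f P/(1 + P/M))) and Δ̃ := log((1 + α f P)/(1 + α f P/(1 + P/M))). -/

import Mathlib

open Real Finset

lemma harmonic_le_log (n : ℕ) (hn : 3 ≤ n) :
    ∑ β ∈ Finset.Icc 2 (n - 1), (1 / (β : ℝ)) ≤ Real.log ((n : ℝ) - 1) := by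
  induction n, hn using Nat.le_induction with
  | base =>
    norm_num
    have := Real.log_two_gt_d9
    linarith
  | succ n hn ih =>
    have h1 : n + 1 - 1 = (n - 1) + 1 := by omega
    rw [h1, Finset.sum_Icc_succ_top (by omega : 2 ≤ n - 1 + 1)]
    have h2 : (n - 1 : ℕ) + 1 = n := by omega
    rw [h2]
    have hn3 : (3 : ℝ) ≤ (n : ℝ) := by exact_mod_cast hn
    have hpos : (0 : ℝ) < ((n : ℝ) - 1) / n := div_pos (by linarith) (by linarith)
    have hlog := Real.log_le_sub_one_of_pos hpos
    rw [Real.log_div (by linarith) (by linarith)] at hlog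
    have hfrac : ((n : ℝ) - 1) / n - 1 = -(1 / n) := by
      field_simp
      ring
    rw [hfrac] at hlog
    push_cast
    have hgoal : (n : ℝ) + 1 - 1 = (n : ℝ) := by ring
    rw [hgoal]
    linarith

lemma ptwise (M : ℕ) (hM : 1 ≤ M) (P f α : ℝ) (hP : 0 < P) (hf : 0 < f) (hα : 0 < α)
    (b : ℝ) (hb : 1 ≤ b) :
    Real.log ((1 + (P / M) * ((M : ℝ) - 1) / (1 + b * f * P) + α * f * P) /
        (1 + α * f * P / (1 + P / M)))
      ≤ Real.log ((1 + α * f * P) / (1 + α * f * P / (1 + P / M)))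
        + ((M : ℝ) - 1) / ((M : ℝ) * f) * (1 / b) := by
  have hMpos : (0 : ℝ) < M := by exact_mod_cast hM
  have hM1 : (1 : ℝ) ≤ (M : ℝ) := by exact_mod_cast hM
  have hc : 0 < α * f * P := by positivity
  have hbfP : 0 < b * f * P := by positivity
  have hPM : 0 < 1 + P / M := by positivity
  have hDen : 0 < 1 + α * f * P / (1 + P / M) := by positivity
  have haβ : 0 ≤ (P / M) * ((M : ℝ) - 1) / (1 + b * f * P) := by
    apply div_nonneg
    · apply mul_nonneg (by positivity); linarith
    · linarith
  have hN : (0 : ℝ) < 1 + α * f * P := by linarith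
  have hNβ : (0 : ℝ) < 1 + (P / M) * ((M : ℝ) - 1) / (1 + b * f * P) + α * f * P := by
    linarith
  rw [Real.log_div (by linarith) (by linarith), Real.log_div (by linarith) (by linarith)]
  have key : Real.log (1 + (P / M) * ((M : ℝ) - 1) / (1 + b * f * P) + α * f * P)
      - Real.log (1 + α * f * P) ≤ ((M : ℝ) - 1) / ((M : ℝ) * f) * (1 / b) := by
    rw [← Real.log_div (by linarith) (by linarith)]
    have hq : 0 < (1 + (P / M) * ((M : ℝ) - 1) / (1 + b * f * P) + α * f * P)
        / (1 + α * f * P) := by positivity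
    have h1 := Real.log_le_sub_one_of_pos hq
    have h2 : (1 + (P / M) * ((M : ℝ) - 1) / (1 + b * f * P) + α * f * P)
        / (1 + α * f * P) - 1
        = (P / M) * ((M : ℝ) - 1) / (1 + b * f * P) / (1 + α * f * P) := by
      field_simp
      ring
    have h3 : (P / M) * ((M : ℝ) - 1) / (1 + b * f * P) / (1 + α * f * P)
        ≤ (P / M) * ((M : ℝ) - 1) / (1 + b * f * P) := by
      rw [div_le_iff₀ (by linarith)]
      nlinarith [haβ]
    have h4 : (P / M) * ((M : ℝ) - 1) / (1 + b * f * P)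
        ≤ (P / M) * ((M : ℝ) - 1) / (b * f * P) := by
      apply div_le_div_of_nonneg_left _ hbfP (by linarith)
      apply mul_nonneg (by positivity); linarith
    have h5 : (P / M) * ((M : ℝ) - 1) / (b * f * P)
        = ((M : ℝ) - 1) / ((M : ℝ) * f) * (1 / b) := by
      field_simp
    linarith
  linarith

/-- core of the Proposition on the spectral efficiency gain of
full-duplex CAB over half-duplex, Appendix E.
`∑_{β=2}^{n−1} (R − D(β)) ≥ (n−2)(R − Δ̃) − ((M−1)/(Mf))·log(n−1)`. -/
theorem stmt_14 (M : ℕ) (hM : 1 ≤ M) (P f α R : ℝ) (hP : 0 < P) (hf : 0 < f) (hα : 0 < α)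
    (n : ℕ) (hn : 3 ≤ n) :
    ∑ β ∈ Finset.Icc 2 (n - 1),
        (R - Real.log ((1 + (P / M) * ((M : ℝ) - 1) / (1 + (β : ℝ) * f * P) + α * f * P) /
          (1 + α * f * P / (1 + P / M))))
      ≥ ((n : ℝ) - 2) *
          (R - Real.log ((1 + α * f * P) / (1 + α * f * P / (1 + P / M)))) -
        (((M : ℝ) - 1) / ((M : ℝ) * f)) * Real.log ((n : ℝ) - 1) := by
  have hcard : (Finset.Icc 2 (n - 1)).card = n - 2 := by
    rw [Nat.card_Icc]; omega
  have hM1 : (1 : ℝ) ≤ (M : ℝ) := by exact_mod_cast hM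
  have hK : 0 ≤ ((M : ℝ) - 1) / ((M : ℝ) * f) := by
    apply div_nonneg (by linarith) (by positivity)
  have hsum : ∑ β ∈ Finset.Icc 2 (n - 1),
      Real.log ((1 + (P / M) * ((M : ℝ) - 1) / (1 + (β : ℝ) * f * P) + α * f * P) /
        (1 + α * f * P / (1 + P / M)))
      ≤ ∑ β ∈ Finset.Icc 2 (n - 1),
        (Real.log ((1 + α * f * P) / (1 + α * f * P / (1 + P / M)))
          + ((M : ℝ) - 1) / ((M : ℝ) * f) * (1 / (β : ℝ))) := by
    apply Finset.sum_le_sum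
    intro β hβ
    have hβ2 : 2 ≤ β := (Finset.mem_Icc.mp hβ).1
    exact ptwise M hM P f α hP hf hα (β : ℝ) (by exact_mod_cast hβ2.trans' (by norm_num))
  rw [Finset.sum_add_distrib, Finset.sum_const, ← Finset.mul_sum] at hsum
  have hharm := harmonic_le_log n hn
  have hsum2 : ((M : ℝ) - 1) / ((M : ℝ) * f) * ∑ β ∈ Finset.Icc 2 (n - 1), (1 / (β : ℝ))
      ≤ ((M : ℝ) - 1) / ((M : ℝ) * f) * Real.log ((n : ℝ) - 1) :=
    mul_le_mul_of_nonneg_left hharm hK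
  have hcast : ((Finset.Icc 2 (n - 1)).card : ℝ) = (n : ℝ) - 2 := by
    rw [hcard]; have : 2 ≤ n := by omega
    push_cast [Nat.cast_sub this]; ring
  rw [Finset.sum_sub_distrib, Finset.sum_const, nsmul_eq_mul, hcast]
  rw [nsmul_eq_mul, hcast] at hsum
  nlinarith [hsum, hsum2]
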